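/- Let G be a cyclically 4-edge-connected cubic graph, let S be a cycle-separating 4-edge-cut of G, and let K be a component of G − S. Then either any two nontrivial 2-edge-cuts of K are comparable, or K is a cycle of length 4. -/

import Mathlib

open SimpleGraph

/-- Two edges (as unordered pairs) are adjacent: distinct and sharing a vertex. -/
def Sym2Adj {V : Type} (e f : Sym2 V) : Prop := e ≠ f ∧ ∃ v, v ∈ e ∧ v ∈ f

/-- A graph is cubic if every vertex has exactly 3 neighbours. -/
def IsCubic {V : Type} (G : SimpleGraph V) : Prop := ∀ v, Nat.card (G.neighborSet v) = 3

/-- `G` admits a proper 3-edge-colouring. -/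
def Colourable3 {V : Type} (G : SimpleGraph V) : Prop :=
  ∃ c : G.edgeSet → Fin 3, ∀ e f : G.edgeSet, Sym2Adj (e : Sym2 V) (f : Sym2 V) → c e ≠ c f

/-- A snark: a connected cubic graph with no proper 3-edge-colouring. -/
def IsSnark {V : Type} (G : SimpleGraph V) : Prop := G.Connected ∧ IsCubic G ∧ ¬ Colourable3 G

/-- `S` is a cycle-separating set of edges of `G`: at least two components of `G - S`
contain a cycle. -/
def CycleSeparating {V : Type} (G : SimpleGraph V) (S : Set (Sym2 V)) : Prop :=
  S ⊆ G.edgeSet ∧ ∃ (u v : V) (p : (G.deleteEdges S).Walk u u) (q : (G.deleteEdges S).Walk v v),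
    p.IsCycle ∧ q.IsCycle ∧ ¬ (G.deleteEdges S).Reachable u v

/-- `G` is cyclically `k`-edge-connected: no set of fewer than `k` edges is cycle-separating. -/
def CyclicallyEdgeConnected {V : Type} (G : SimpleGraph V) (k : ℕ) : Prop :=
  ∀ S : Set (Sym2 V), Nat.card S < k → ¬ CycleSeparating G S

/-- The cycle rank `β(G) = |E(G)| - |V(G)| + 1`. -/
noncomputable def cycleRank {V : Type} (G : SimpleGraph V) : ℕ :=
  Nat.card G.edgeSet + 1 - Nat.card V

/-- The cyclic connectivity: the largest `k ≤ β(G)` such that `G` is cyclically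
`k`-edge-connected. -/
noncomputable def cyclicConnectivity {V : Type} (G : SimpleGraph V) : ℕ :=
  sSup {k : ℕ | k ≤ cycleRank G ∧ CyclicallyEdgeConnected G k}

/-- `H` is a 2-factor of `G`: a spanning 2-regular subgraph. -/
def IsTwoFactor {V : Type} (G H : SimpleGraph V) : Prop :=
  H ≤ G ∧ ∀ v, Nat.card (H.neighborSet v) = 2

/-- The number of connected components of `H` with an odd number of vertices. -/
noncomputable def oddComponents {V : Type} (H : SimpleGraph V) : ℕ :=
  Nat.card {c : H.ConnectedComponent // Odd (Nat.card c.supp)}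

/-- The oddness of `G`: the minimum number of odd components over all 2-factors of `G`. -/
noncomputable def oddness {V : Type} (G : SimpleGraph V) : ℕ :=
  sInf {m : ℕ | ∃ H, IsTwoFactor G H ∧ _root_.oddComponents H = m}

/-- The set of edges of `G` with exactly one endpoint in `A`. -/
def edgeBoundary {V : Type} (G : SimpleGraph V) (A : Set V) : Set (Sym2 V) :=
  {e | e ∈ G.edgeSet ∧ ∃ u v, e = s(u, v) ∧ u ∈ A ∧ v ∉ A}

/-- A graph is bridgeless if no edge is a bridge. -/
def Bridgeless {V : Type} (G : SimpleGraph V) : Prop := ∀ e, ¬ G.IsBridge e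

/-- The resistance of `G`: the minimum number of edges to delete to obtain a
3-edge-colourable graph. -/
noncomputable def resistance {V : Type} (G : SimpleGraph V) : ℕ :=
  sInf {n : ℕ | ∃ F : Set (Sym2 V), F ⊆ G.edgeSet ∧ Nat.card F = n ∧
    Colourable3 (G.deleteEdges F)}

/-- Two edge-cuts of `H` (each leaving two components) are comparable: some component of
`H - R` is contained in some component of `H - T` or vice versa. -/
def ComparableCuts {W : Type} (H : SimpleGraph W) (R T : Set (Sym2 W)) : Prop :=
  ∃ (A : (H.deleteEdges R).ConnectedComponent) (B : (H.deleteEdges T).ConnectedComponent),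
    A.supp ⊆ B.supp ∨ B.supp ⊆ A.supp

/-- An edge-cut is nontrivial if it is not the set of all edges incident with one vertex. -/
def NontrivialCut {W : Type} (H : SimpleGraph W) (T : Set (Sym2 W)) : Prop :=
  ¬ ∃ v : W, T = {e | e ∈ H.edgeSet ∧ v ∈ e}

namespace Stmt14
open Classical
variable {V : Type}

lemma mem_bd {G : SimpleGraph V} {X : Set V} {a b : V} (hab : G.Adj a b) (ha : a ∈ X)
    (hb : b ∉ X) : s(a, b) ∈ edgeBoundary G X :=
  ⟨hab, a, b, rfl, ha, hb⟩

lemma bd_elim {G : SimpleGraph V} {X : Set V} {e : Sym2 V} (he : e ∈ edgeBoundary G X) :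
    ∃ a b, e = s(a, b) ∧ G.Adj a b ∧ a ∈ X ∧ b ∉ X := by
  obtain ⟨hE, u, v, rfl, hu, hv⟩ := he
  exact ⟨u, v, rfl, hE, hu, hv⟩

lemma bd_subset_edgeSet {G : SimpleGraph V} {X : Set V} :
    edgeBoundary G X ⊆ G.edgeSet := fun e he => he.1

/-- an endpoint witness inside `A` for boundary edges -/
lemma bd_endpoint {G : SimpleGraph V} {X : Set V} {a b : V}
    (he : s(a, b) ∈ edgeBoundary G X) : a ∈ X ∨ b ∈ X := by
  obtain ⟨u, v, huv, _, hu, _⟩ := bd_elim he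
  rw [Sym2.eq_iff] at huv
  rcases huv with ⟨rfl, rfl⟩ | ⟨rfl, rfl⟩
  · exact Or.inl hu
  · exact Or.inr hu

lemma sym2_pair_injective {v : V} : Function.Injective (fun x => s(v, x)) := by
  intro a b h
  simpa using Sym2.congr_right.mp h

lemma bd_singleton {G : SimpleGraph V} (v : V) :
    edgeBoundary G {v} = (fun x => s(v, x)) '' G.neighborSet v := by
  ext e
  constructor
  · intro he
    obtain ⟨a, b, rfl, hab, ha, hb⟩ := bd_elim he
    rcases ha with rfl
    exact ⟨b, hab, rfl⟩
  · rintro ⟨x, hx, rfl⟩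
    exact mem_bd hx rfl (by simpa using (hx : G.Adj v x).ne')

lemma ncard_bd_singleton {G : SimpleGraph V} (hcubic : IsCubic G) (v : V) :
    (edgeBoundary G {v}).ncard = 3 := by
  rw [bd_singleton, Set.ncard_image_of_injective _ sym2_pair_injective,
    ← Nat.card_coe_set_eq]
  exact hcubic v

/-- generic incidence set description -/
lemma incidence_eq {W : Type} (Γ : SimpleGraph W) (w : W) :
    {e : Sym2 W | e ∈ Γ.edgeSet ∧ w ∈ e} = (fun x => s(w, x)) '' Γ.neighborSet w := by
  ext e
  induction e using Sym2.ind with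
  | _ a b =>
    constructor
    · rintro ⟨he, hw⟩
      rw [Sym2.mem_iff] at hw
      rw [SimpleGraph.mem_edgeSet] at he
      rcases hw with rfl | rfl
      · exact ⟨b, he, rfl⟩
      · exact ⟨a, he.symm, Sym2.eq_swap⟩
    · rintro ⟨x, hx, hxe⟩
      rw [← hxe]
      exact ⟨hx, Sym2.mem_mk_left _ _⟩

lemma ncard_incidence {W : Type} (Γ : SimpleGraph W) (w : W) :
    {e : Sym2 W | e ∈ Γ.edgeSet ∧ w ∈ e}.ncard = (Γ.neighborSet w).ncard := by
  rw [incidence_eq, Set.ncard_image_of_injective _ sym2_pair_injective]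

end Stmt14
namespace Stmt14
open Classical

lemma reach_induce_supp {W : Type} (Γ : SimpleGraph W) (C : Γ.ConnectedComponent) :
    ∀ {x y : W} (_ : Γ.Walk x y) (hx : x ∈ C.supp) (hy : y ∈ C.supp),
      (Γ.induce C.supp).Reachable ⟨x, hx⟩ ⟨y, hy⟩ := by
  intro x y p
  induction p with
  | nil => intro hx hy; exact Reachable.refl _
  | @cons x z y h q ih =>
    intro hx hy
    have hz : z ∈ C.supp := by
      rw [ConnectedComponent.mem_supp_iff] at hx ⊢
      rw [← hx]
      exact ConnectedComponent.sound h.symm.reachable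
    have hadj : (Γ.induce C.supp).Adj ⟨x, hx⟩ ⟨z, hz⟩ := by
      simp only [SimpleGraph.comap_adj]
      exact h
    exact hadj.reachable.trans (ih hz hy)

lemma val_image_neighborSet_induce_supp {W : Type} (Γ : SimpleGraph W)
    (C : Γ.ConnectedComponent) (w : ↥C.supp) :
    Subtype.val '' ((Γ.induce C.supp).neighborSet w) = Γ.neighborSet (w : W) := by
  ext b
  constructor
  · rintro ⟨b', hb', rfl⟩
    exact hb'
  · intro hb
    have hbs : b ∈ C.supp := by
      rw [ConnectedComponent.mem_supp_iff]
      have := (ConnectedComponent.mem_supp_iff _ _).mp w.2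
      rw [← this]
      exact ConnectedComponent.sound (hb : Γ.Adj _ b).symm.reachable
    exact ⟨⟨b, hbs⟩, by simpa [SimpleGraph.neighborSet, SimpleGraph.comap_adj] using hb, rfl⟩

lemma exists_cycle_of_two_le_degree {W : Type} [Fintype W] (Γ : SimpleGraph W) (w0 : W)
    (hdeg : ∀ w, 2 ≤ (Γ.neighborSet w).ncard) :
    ∃ (w : W) (p : Γ.Walk w w), p.IsCycle := by
  by_contra hno
  push_neg at hno
  have hac : Γ.IsAcyclic := fun w p hp => hno w p hp
  set C := Γ.connectedComponentMk w0 with hC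
  set Γ' := Γ.induce C.supp with hΓ'
  haveI : Fintype ↥C.supp := Fintype.ofFinite _
  haveI : DecidableRel Γ'.Adj := Classical.decRel _
  have hconn : Γ'.Connected := by
    rw [connected_iff]
    refine ⟨fun a b => ?_, ⟨⟨w0, by simp [hC, ConnectedComponent.mem_supp_iff]⟩⟩⟩
    obtain ⟨p⟩ : Γ.Reachable a.val b.val := by
      have ha := (ConnectedComponent.mem_supp_iff _ _).mp a.2
      have hb := (ConnectedComponent.mem_supp_iff _ _).mp b.2
      exact ConnectedComponent.exact (ha.trans hb.symm)
    have := reach_induce_supp Γ C p a.2 b.2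
    simpa using this
  have hac' : Γ'.IsAcyclic := by
    intro w p hp
    have hinj : Function.Injective ((Embedding.induce C.supp).toHom :
        Γ' →g Γ) := Subtype.val_injective
    exact hac _ ((Walk.map_isCycle_iff_of_injective hinj).mpr hp)
  have htree : Γ'.IsTree := ⟨hconn, hac'⟩
  have hcard := htree.card_edgeFinset
  have hhs := Γ'.sum_degrees_eq_twice_card_edges
  have hdeg' : ∀ w : ↥C.supp, 2 ≤ Γ'.degree w := by
    intro w
    have h1 : (Γ'.neighborSet w).ncard = (Γ.neighborSet (w : W)).ncard := by
      rw [← val_image_neighborSet_induce_supp Γ C w,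
        Set.ncard_image_of_injective _ Subtype.val_injective]
    have h2 : Γ'.degree w = (Γ'.neighborSet w).ncard := by
      rw [SimpleGraph.degree, Set.ncard_eq_toFinset_card', SimpleGraph.neighborFinset_def]
    rw [h2, h1]
    exact hdeg _
  have hsum : 2 * Fintype.card ↥C.supp ≤ ∑ w : ↥C.supp, Γ'.degree w := by
    calc 2 * Fintype.card ↥C.supp = ∑ _w : ↥C.supp, 2 := by
          simp [Finset.sum_const, Finset.card_univ, Nat.mul_comm]
      _ ≤ ∑ w : ↥C.supp, Γ'.degree w := Finset.sum_le_sum (fun i _ => hdeg' i)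
  have hpos : 0 < Fintype.card ↥C.supp := Fintype.card_pos_iff.mpr
    ⟨⟨w0, by simp [hC, ConnectedComponent.mem_supp_iff]⟩⟩
  omega

end Stmt14
namespace Stmt14
open Classical
variable {V : Type} [Fintype V]

lemma sum_ncard_le_of_disjoint {ι : Type} {S : Set (Sym2 V)} (s : Finset ι)
    (f : ι → Set (Sym2 V)) (hsub : ∀ i ∈ s, f i ⊆ S)
    (hdisj : ∀ i ∈ s, ∀ j ∈ s, i ≠ j → Disjoint (f i) (f j)) :
    ∑ i ∈ s, (f i).ncard ≤ S.ncard := by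
  classical
  have hcards : ∀ i, (f i).ncard = (Set.toFinite (f i)).toFinset.card :=
    fun i => Set.ncard_eq_toFinset_card _ _
  calc ∑ i ∈ s, (f i).ncard = ∑ i ∈ s, (Set.toFinite (f i)).toFinset.card := by
        simp [hcards]
    _ = (s.biUnion (fun i => (Set.toFinite (f i)).toFinset)).card := by
        rw [Finset.card_biUnion]
        intro i hi j hj hij
        simp only [Function.onFun]
        rw [Set.Finite.disjoint_toFinset]
        exact hdisj i hi j hj hij
    _ ≤ (Set.toFinite S).toFinset.card := by
        apply Finset.card_le_card
        intro e he
        rw [Finset.mem_biUnion] at he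
        obtain ⟨i, hi, hei⟩ := he
        rw [Set.Finite.mem_toFinset] at hei ⊢
        exact hsub i hi hei
    _ = S.ncard := (Set.ncard_eq_toFinset_card _ _).symm

lemma sum_ncard_bd_inter_le {ι : Type} {G : SimpleGraph V} (s : Finset ι)
    (A : ι → Set V) (hdisj : ∀ i ∈ s, ∀ j ∈ s, i ≠ j → Disjoint (A i) (A j))
    (E : Set (Sym2 V)) :
    ∑ i ∈ s, (E ∩ edgeBoundary G (A i)).ncard ≤ 2 * E.ncard := by
  classical
  have h1 : ∀ i, (E ∩ edgeBoundary G (A i)).ncard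
      = ((Set.toFinite E).toFinset.filter (fun e => e ∈ edgeBoundary G (A i))).card := by
    intro i
    rw [Set.ncard_eq_toFinset_card _ (Set.toFinite _)]
    congr 1
    ext e
    simp only [Finset.mem_filter, Set.Finite.mem_toFinset, Set.mem_inter_iff]
  have hper : ∀ e : Sym2 V,
      (s.filter (fun i => e ∈ edgeBoundary G (A i))).card ≤ 2 := by
    intro e
    induction e using Sym2.ind with
    | _ a b =>
      have hsub2 : (s.filter (fun i => s(a,b) ∈ edgeBoundary G (A i)))
          ⊆ (s.filter (fun i => a ∈ A i)) ∪ (s.filter (fun i => b ∈ A i)) := by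
        intro i hi
        rw [Finset.mem_filter] at hi
        rcases bd_endpoint hi.2 with h | h
        · exact Finset.mem_union_left _ (Finset.mem_filter.mpr ⟨hi.1, h⟩)
        · exact Finset.mem_union_right _ (Finset.mem_filter.mpr ⟨hi.1, h⟩)
      have hone : ∀ (x : V), (s.filter (fun i => x ∈ A i)).card ≤ 1 := by
        intro x
        rw [Finset.card_le_one]
        intro i hi j hj
        rw [Finset.mem_filter] at hi hj
        by_contra hne
        exact (Set.disjoint_left.mp (hdisj i hi.1 j hj.1 hne) hi.2) hj.2
      calc (s.filter (fun i => s(a,b) ∈ edgeBoundary G (A i))).card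
          ≤ ((s.filter (fun i => a ∈ A i)) ∪ (s.filter (fun i => b ∈ A i))).card :=
            Finset.card_le_card hsub2
        _ ≤ _ := Finset.card_union_le _ _
        _ ≤ 2 := by
            have := hone a
            have := hone b
            omega
  calc ∑ i ∈ s, (E ∩ edgeBoundary G (A i)).ncard
      = ∑ i ∈ s, ∑ e ∈ (Set.toFinite E).toFinset,
          (if e ∈ edgeBoundary G (A i) then 1 else 0) := by
        simp only [h1]
        congr 1
        ext i
        exact Finset.card_filter _ _
    _ = ∑ e ∈ (Set.toFinite E).toFinset, ∑ i ∈ s,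
          (if e ∈ edgeBoundary G (A i) then 1 else 0) := Finset.sum_comm
    _ ≤ ∑ _e ∈ (Set.toFinite E).toFinset, 2 := by
        apply Finset.sum_le_sum
        intro e _
        rw [← Finset.card_filter]
        exact hper e
    _ = 2 * E.ncard := by
        rw [Finset.sum_const, Set.ncard_eq_toFinset_card E (Set.toFinite E),
          smul_eq_mul, Nat.mul_comm]

end Stmt14
namespace Stmt14
open Classical
variable {V : Type} [Fintype V]

lemma bd_insert_diff {G : SimpleGraph V} {X : Set V} {v : V} :
    (edgeBoundary G (insert v X)) \ {e : Sym2 V | v ∈ e}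
      = (edgeBoundary G X) \ {e : Sym2 V | v ∈ e} := by
  ext e
  constructor
  · rintro ⟨he, hv⟩
    obtain ⟨a, b, rfl, hab, ha, hb⟩ := bd_elim he
    simp only [Set.mem_setOf_eq, Sym2.mem_iff] at hv
    push_neg at hv
    rcases Set.mem_insert_iff.mp ha with rfl | ha'
    · exact absurd rfl hv.1
    · exact ⟨mem_bd hab ha' (fun hbX => hb (Set.mem_insert_of_mem _ hbX)),
        by simp [hv.1, hv.2]⟩
  · rintro ⟨he, hv⟩
    obtain ⟨a, b, rfl, hab, ha, hb⟩ := bd_elim he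
    simp only [Set.mem_setOf_eq, Sym2.mem_iff] at hv
    push_neg at hv
    refine ⟨mem_bd hab (Set.mem_insert_of_mem _ ha) ?_, by simp [hv.1, hv.2]⟩
    intro hbi
    rcases Set.mem_insert_iff.mp hbi with rfl | hbX
    · exact hv.2 rfl
    · exact hb hbX

lemma bd_insert_inter {G : SimpleGraph V} {X : Set V} {v : V} :
    (edgeBoundary G (insert v X)) ∩ {e : Sym2 V | v ∈ e}
      = (fun x => s(v, x)) '' (G.neighborSet v \ insert v X) := by
  ext e
  constructor
  · rintro ⟨he, hv⟩
    obtain ⟨a, b, rfl, hab, ha, hb⟩ := bd_elim he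
    simp only [Set.mem_setOf_eq, Sym2.mem_iff] at hv
    have hbv : b ≠ v := fun h => hb (h ▸ Set.mem_insert _ _)
    rcases hv with rfl | rfl
    · exact ⟨b, ⟨hab, hb⟩, rfl⟩
    · exact absurd rfl hbv
  · rintro ⟨x, ⟨hx, hxi⟩, rfl⟩
    exact ⟨mem_bd hx (Set.mem_insert _ _) hxi, by simp⟩

lemma bd_base_inter {G : SimpleGraph V} {X : Set V} {v : V} (hv : v ∉ X) :
    (edgeBoundary G X) ∩ {e : Sym2 V | v ∈ e}
      = (fun x => s(v, x)) '' (G.neighborSet v ∩ X) := by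
  ext e
  constructor
  · rintro ⟨he, hvm⟩
    obtain ⟨a, b, rfl, hab, ha, hb⟩ := bd_elim he
    simp only [Set.mem_setOf_eq, Sym2.mem_iff] at hvm
    rcases hvm with rfl | rfl
    · exact absurd ha hv
    · exact ⟨a, ⟨hab.symm, ha⟩, Sym2.eq_swap⟩
  · rintro ⟨x, ⟨hx, hxX⟩, rfl⟩
    refine ⟨⟨(hx : G.Adj v x), x, v, Sym2.eq_swap.symm, hxX, hv⟩, by simp⟩

lemma nbr_split {G : SimpleGraph V} (hcubic : IsCubic G) {X : Set V} (v : V) :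
    (G.neighborSet v ∩ X).ncard + (G.neighborSet v \ insert v X).ncard = 3 := by
  have hdisj : Disjoint (G.neighborSet v ∩ X) (G.neighborSet v \ insert v X) := by
    rw [Set.disjoint_left]
    rintro x ⟨_, hxX⟩ ⟨_, hxd⟩
    exact hxd (Set.mem_insert_of_mem _ hxX)
  have hunion : (G.neighborSet v ∩ X) ∪ (G.neighborSet v \ insert v X)
      = G.neighborSet v := by
    ext x
    constructor
    · rintro (⟨h, _⟩ | ⟨h, _⟩) <;> exact h
    · intro hx
      by_cases hxX : x ∈ X
      · exact Or.inl ⟨hx, hxX⟩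
      · refine Or.inr ⟨hx, ?_⟩
        intro hxi
        rcases Set.mem_insert_iff.mp hxi with rfl | h
        · exact G.irrefl hx
        · exact hxX h
  have h3 : (G.neighborSet v).ncard = 3 := by
    rw [← Nat.card_coe_set_eq]; exact hcubic v
  have h4 := Set.ncard_union_eq hdisj (Set.toFinite _) (Set.toFinite _)
  rw [hunion] at h4
  rw [h4] at h3
  exact h3

lemma bd_insert_card {G : SimpleGraph V} {X : Set V} {v : V} (hv : v ∉ X) :
    (edgeBoundary G (insert v X)).ncard + (G.neighborSet v ∩ X).ncard
      = (edgeBoundary G X).ncard + (G.neighborSet v \ insert v X).ncard := by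
  have h1 := Set.ncard_inter_add_ncard_diff_eq_ncard (edgeBoundary G (insert v X))
    {e : Sym2 V | v ∈ e} (Set.toFinite _)
  have h2 := Set.ncard_inter_add_ncard_diff_eq_ncard (edgeBoundary G X)
    {e : Sym2 V | v ∈ e} (Set.toFinite _)
  rw [bd_insert_diff] at h1
  rw [bd_insert_inter, Set.ncard_image_of_injective _ sym2_pair_injective] at h1
  rw [bd_base_inter hv, Set.ncard_image_of_injective _ sym2_pair_injective] at h2
  omega

end Stmt14
namespace Stmt14
open Classical
variable {V : Type} [Fintype V] {G : SimpleGraph V} {S : Set (Sym2 V)}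

lemma no_reach_across {X : Set V} {u v : V} (hu : u ∈ X) (hv : v ∉ X) :
    ¬ (G.deleteEdges (edgeBoundary G X)).Reachable u v := by
  rintro ⟨p⟩
  obtain ⟨d, _, hd1, hd2⟩ := p.exists_boundary_dart X hu hv
  have hadj := d.adj
  rw [SimpleGraph.deleteEdges_adj] at hadj
  exact hadj.2 (mem_bd hadj.1 hd1 hd2)

lemma exists_outside_cycle (hS : CycleSeparating G S)
    (c : (G.deleteEdges S).ConnectedComponent) :
    ∃ (v : V), v ∉ c.supp ∧ ∃ q : (G.deleteEdges S).Walk v v, q.IsCycle := by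
  obtain ⟨-, u, v, p, q, hp, hq, hn⟩ := hS
  by_cases hu : u ∈ c.supp
  · refine ⟨v, fun hv => hn ?_, q, hq⟩
    rw [ConnectedComponent.mem_supp_iff] at hu hv
    exact ConnectedComponent.exact (hu.trans hv.symm)
  · exact ⟨u, hu, p, hp⟩

lemma not_supp_of_walk {c : (G.deleteEdges S).ConnectedComponent} {v x : V}
    (hv : v ∉ c.supp) (q : (G.deleteEdges S).Walk v x) : x ∉ c.supp := by
  intro hx
  apply hv
  rw [ConnectedComponent.mem_supp_iff] at hx ⊢
  rw [← hx]
  exact ConnectedComponent.sound ⟨q⟩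

lemma four_le_bd (h4 : CyclicallyEdgeConnected G 4) (hS : CycleSeparating G S)
    (c : (G.deleteEdges S).ConnectedComponent) {X : Set V} (hX : X ⊆ c.supp) {w : V}
    (p : G.Walk w w) (hp : p.IsCycle) (hsup : ∀ x ∈ p.support, x ∈ X) :
    4 ≤ (edgeBoundary G X).ncard := by
  classical
  by_contra hlt
  push_neg at hlt
  apply h4 (edgeBoundary G X) (by rw [Nat.card_coe_set_eq]; omega)
  obtain ⟨v0, hv0, q0, hq0⟩ := exists_outside_cycle hS c
  have hv0X : v0 ∉ X := fun h => hv0 (hX h)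
  have hpe : ∀ e ∈ p.edges, e ∈ (G.deleteEdges (edgeBoundary G X)).edgeSet := by
    intro e he
    rw [SimpleGraph.edgeSet_deleteEdges, Set.mem_diff]
    refine ⟨p.edges_subset_edgeSet he, ?_⟩
    intro heB
    obtain ⟨x, y, rfl, _, _, hyX⟩ := bd_elim heB
    exact hyX (hsup y (p.snd_mem_support_of_mem_edges he))
  have hqe : ∀ e ∈ q0.edges, e ∈ (G.deleteEdges (edgeBoundary G X)).edgeSet := by
    intro e he
    rw [SimpleGraph.edgeSet_deleteEdges, Set.mem_diff]
    have heS := q0.edges_subset_edgeSet he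
    rw [SimpleGraph.edgeSet_deleteEdges, Set.mem_diff] at heS
    refine ⟨heS.1, ?_⟩
    intro heB
    obtain ⟨x, y, hxy, _, hxX, _⟩ := bd_elim heB
    rw [hxy] at he
    have hxs : x ∈ q0.support := q0.fst_mem_support_of_mem_edges he
    exact not_supp_of_walk hv0 (q0.takeUntil x hxs) (hX hxX)
  refine ⟨bd_subset_edgeSet, w, v0,
    p.transfer _ hpe, q0.transfer _ hqe, hp.transfer hpe, hq0.transfer hqe, ?_⟩
  exact no_reach_across (hsup w p.start_mem_support) hv0X

lemma min_le_bd (hcubic : IsCubic G) (h4 : CyclicallyEdgeConnected G 4)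
    (hS : CycleSeparating G S) (c : (G.deleteEdges S).ConnectedComponent) :
    ∀ (n : ℕ) (X : Set V), X.ncard = n → X ⊆ c.supp → X.Nonempty →
      min 4 (X.ncard + 2) ≤ (edgeBoundary G X).ncard := by
  intro n
  induction n using Nat.strong_induction_on with
  | _ n ih =>
    intro X hn hX hne
    by_cases hleaf : ∃ v ∈ X, (G.neighborSet v ∩ (X \ {v})).ncard ≤ 1
    · obtain ⟨v, hvX, hdin⟩ := hleaf
      set X' := X \ {v} with hX'
      have hvX' : v ∉ X' := by simp [hX']
      have hins : insert v X' = X := by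
        rw [hX', Set.insert_diff_singleton, Set.insert_eq_self.mpr hvX]
      by_cases hX'e : X' = ∅
      · have hXv : X = {v} := by
          rw [← hins, hX'e]; simp
        rw [hXv, ncard_bd_singleton hcubic v]
        simp [Set.ncard_singleton]
      · have hne' : X'.Nonempty := Set.nonempty_iff_ne_empty.mpr hX'e
        have hcard' : X'.ncard = n - 1 := by
          rw [hX', Set.ncard_diff_singleton_of_mem hvX, hn]
        have hpos : 0 < n := by
          rw [← hn]
          exact (Set.ncard_pos (Set.toFinite _)).mpr hne
        have hIH := ih (n-1) (by omega) X' hcard' (fun x hx => hX hx.1) hne'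
        have hsplit := nbr_split hcubic (X := X') v
        have hkey := bd_insert_card (G := G) (X := X') (v := v) hvX'
        rw [hins] at hkey hsplit
        have hXcard : X.ncard = X'.ncard + 1 := by omega
        rcases min_cases 4 (X.ncard+2) with ⟨h1,h2⟩|⟨h1,h2⟩ <;>
          rcases min_cases 4 (X'.ncard+2) with ⟨h3,h4⟩|⟨h3,h4⟩ <;>
          rw [h1] <;> rw [h3] at hIH <;> omega
    · push_neg at hleaf
      haveI : Fintype ↥X := Fintype.ofFinite _
      obtain ⟨x0, hx0⟩ := hne
      have hdeg : ∀ w : ↥X, 2 ≤ ((G.induce X).neighborSet w).ncard := by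
        intro w
        have himg : Subtype.val '' ((G.induce X).neighborSet w)
            = G.neighborSet (w : V) ∩ (X \ {(w : V)}) := by
          ext b
          constructor
          · rintro ⟨b', hb', rfl⟩
            have hadj : G.Adj (w : V) (b' : V) := hb'
            exact ⟨hadj, b'.2, by simp [hadj.ne']⟩
          · rintro ⟨hb1, hb2, _⟩
            exact ⟨⟨b, hb2⟩, by simpa [SimpleGraph.neighborSet, SimpleGraph.comap_adj] using hb1, rfl⟩
        have := hleaf (w : V) w.2
        rw [← himg, Set.ncard_image_of_injective _ Subtype.val_injective] at this
        exact this
      obtain ⟨w, p, hp⟩ := exists_cycle_of_two_le_degree (G.induce X) ⟨x0, hx0⟩ hdeg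
      have hinj : Function.Injective ((Embedding.induce X).toHom : G.induce X →g G) :=
        Subtype.val_injective
      have hcyc := (Walk.map_isCycle_iff_of_injective hinj).mpr hp
      have hsup : ∀ x ∈ (p.map (Embedding.induce X).toHom).support, x ∈ X := by
        intro x hx
        rw [Walk.support_map, List.mem_map] at hx
        obtain ⟨a, _, rfl⟩ := hx
        exact a.2
      exact le_trans (min_le_left _ _) (four_le_bd h4 hS c hX _ hcyc hsup)

lemma S_edge_not_both_in_supp (h4 : CyclicallyEdgeConnected G 4)
    (hS : CycleSeparating G S) (hcard : Nat.card S = 4)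
    (c : (G.deleteEdges S).ConnectedComponent) {a b : V}
    (hab : s(a, b) ∈ S) (ha : a ∈ c.supp) (hb : b ∈ c.supp) : False := by
  classical
  have hreach : (G.deleteEdges S).Reachable a b := by
    rw [ConnectedComponent.mem_supp_iff] at ha hb
    exact ConnectedComponent.exact (ha.trans hb.symm)
  set S' := S \ {s(a, b)} with hS'
  have hcard' : Nat.card ↥S' < 4 := by
    rw [Nat.card_coe_set_eq, hS', Set.ncard_diff_singleton_of_mem hab,
      ← Nat.card_coe_set_eq, hcard]
    omega
  apply h4 S' hcard'
  obtain ⟨hSsub, u, v, p, q, hp, hq, hn⟩ := hS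
  have hsub : ∀ {x y : V} (r : (G.deleteEdges S).Walk x y), ∀ e ∈ r.edges,
      e ∈ (G.deleteEdges S').edgeSet := by
    intro x y r e he
    have := r.edges_subset_edgeSet he
    rw [SimpleGraph.edgeSet_deleteEdges, Set.mem_diff] at this ⊢
    exact ⟨this.1, fun h => this.2 h.1⟩
  have key : ∀ {x y : V}, (G.deleteEdges S').Walk x y → (G.deleteEdges S).Reachable x y := by
    intro x y r
    induction r with
    | nil => exact Reachable.refl _
    | @cons x z y h r ih =>
      rw [SimpleGraph.deleteEdges_adj] at h
      by_cases hxz : s(x, z) ∈ S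
      · have heq : s(x, z) = s(a, b) := by
          by_contra hne
          exact h.2 ⟨hxz, hne⟩
        rw [Sym2.eq_iff] at heq
        rcases heq with ⟨rfl, rfl⟩ | ⟨rfl, rfl⟩
        · exact hreach.trans ih
        · exact hreach.symm.trans ih
      · exact ((SimpleGraph.deleteEdges_adj.mpr ⟨h.1, hxz⟩).reachable).trans ih
  refine ⟨fun e he => hSsub he.1, u, v, p.transfer _ (hsub p), q.transfer _ (hsub q),
    hp.transfer _, hq.transfer _, ?_⟩
  rintro ⟨r⟩
  exact hn (key r)

end Stmt14
namespace Stmt14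
open Classical
variable {V : Type} [Fintype V] {G : SimpleGraph V} {S : Set (Sym2 V)}

lemma S_bd_disjoint (h4 : CyclicallyEdgeConnected G 4) (hS : CycleSeparating G S)
    (hcard : Nat.card S = 4) (c : (G.deleteEdges S).ConnectedComponent)
    {X1 X2 : Set V} (h1 : X1 ⊆ c.supp) (h2 : X2 ⊆ c.supp) (hd : Disjoint X1 X2) :
    Disjoint (S ∩ edgeBoundary G X1) (S ∩ edgeBoundary G X2) := by
  rw [Set.disjoint_left]
  rintro e ⟨heS, he1⟩ ⟨-, he2⟩
  induction e using Sym2.ind with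
  | _ a b =>
    rcases bd_endpoint he1 with ha1 | hb1
    · rcases bd_endpoint he2 with ha2 | hb2
      · exact Set.disjoint_left.mp hd ha1 ha2
      · exact S_edge_not_both_in_supp h4 hS hcard c heS (h1 ha1) (h2 hb2)
    · rcases bd_endpoint he2 with ha2 | hb2
      · exact S_edge_not_both_in_supp h4 hS hcard c heS (h2 ha2) (h1 hb1)
      · exact Set.disjoint_left.mp hd hb1 hb2

lemma family_bounds {ι : Type} (hcubic : IsCubic G) (h4 : CyclicallyEdgeConnected G 4)
    (hS : CycleSeparating G S) (hcard : Nat.card S = 4)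
    (c : (G.deleteEdges S).ConnectedComponent) (s : Finset ι) (Q : ι → Set V)
    (hsub : ∀ i ∈ s, Q i ⊆ c.supp) (hne : ∀ i ∈ s, (Q i).Nonempty)
    (hdisj : ∀ i ∈ s, ∀ j ∈ s, i ≠ j → Disjoint (Q i) (Q j))
    (E : Set (Sym2 V)) (hbd : ∀ i ∈ s, edgeBoundary G (Q i) ⊆ E ∪ S) :
    (∑ i ∈ s, (edgeBoundary G (Q i)).ncard
      ≤ 2 * E.ncard + ∑ i ∈ s, (S ∩ edgeBoundary G (Q i)).ncard)
    ∧ (∑ i ∈ s, (S ∩ edgeBoundary G (Q i)).ncard ≤ S.ncard)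
    ∧ (∀ i ∈ s, 3 ≤ (edgeBoundary G (Q i)).ncard) := by
  classical
  refine ⟨?_, ?_, ?_⟩
  · have hper : ∀ i ∈ s, (edgeBoundary G (Q i)).ncard
        ≤ (E ∩ edgeBoundary G (Q i)).ncard + (S ∩ edgeBoundary G (Q i)).ncard := by
      intro i hi
      have hsub' : edgeBoundary G (Q i)
          ⊆ (E ∩ edgeBoundary G (Q i)) ∪ (S ∩ edgeBoundary G (Q i)) := by
        intro e he
        rcases hbd i hi he with h | h
        · exact Or.inl ⟨h, he⟩
        · exact Or.inr ⟨h, he⟩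
      exact le_trans (Set.ncard_le_ncard hsub' (Set.toFinite _)) (Set.ncard_union_le _ _)
    calc ∑ i ∈ s, (edgeBoundary G (Q i)).ncard
        ≤ ∑ i ∈ s, ((E ∩ edgeBoundary G (Q i)).ncard
            + (S ∩ edgeBoundary G (Q i)).ncard) := Finset.sum_le_sum hper
      _ = ∑ i ∈ s, (E ∩ edgeBoundary G (Q i)).ncard
            + ∑ i ∈ s, (S ∩ edgeBoundary G (Q i)).ncard := Finset.sum_add_distrib
      _ ≤ 2 * E.ncard + ∑ i ∈ s, (S ∩ edgeBoundary G (Q i)).ncard := by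
          have := sum_ncard_bd_inter_le (G := G) s Q hdisj E
          omega
  · exact sum_ncard_le_of_disjoint s _ (fun i _ => Set.inter_subset_left)
      (fun i hi j hj hij => S_bd_disjoint h4 hS hcard c (hsub i hi) (hsub j hj)
        (hdisj i hi j hj hij))
  · intro i hi
    have h1 : 1 ≤ (Q i).ncard := (Set.ncard_pos (Set.toFinite _)).mpr (hne i hi)
    have := min_le_bd hcubic h4 hS c (Q i).ncard (Q i) rfl (hsub i hi) (hne i hi)
    have h3 : (3 : ℕ) ≤ min 4 ((Q i).ncard + 2) := le_min (by norm_num) (by omega)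
    omega

lemma vertex_split (hcubic : IsCubic G) (h4 : CyclicallyEdgeConnected G 4)
    (hS : CycleSeparating G S) (hcard : Nat.card S = 4)
    (c : (G.deleteEdges S).ConnectedComponent) (v : ↥c.supp) :
    (((G.deleteEdges S).induce c.supp).neighborSet v).ncard
      + (S ∩ edgeBoundary G {(v : V)}).ncard = 3 := by
  classical
  set H := (G.deleteEdges S).induce c.supp with hH
  set I : Set (Sym2 V) := Sym2.map Subtype.val '' {e | e ∈ H.edgeSet ∧ v ∈ e} with hI
  have hIends : ∀ e ∈ I, ∀ x ∈ e, x ∈ c.supp := by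
    rintro e ⟨eh, heh, rfl⟩ x hx
    induction eh using Sym2.ind with
    | _ xh yh =>
      rw [Sym2.map_pair_eq, Sym2.mem_iff] at hx
      rcases hx with rfl | rfl
      · exact xh.2
      · exact yh.2
  have hsplit : edgeBoundary G {(v : V)} = I ∪ (S ∩ edgeBoundary G {(v : V)}) := by
    apply Set.Subset.antisymm
    · intro e he
      obtain ⟨a, b, rfl, hab, ha, hb⟩ := bd_elim he
      have hav : a = (v : V) := ha
      subst hav
      by_cases hbK : b ∈ c.supp
      · left
        have hGS : (G.deleteEdges S).Adj (v : V) b := by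
          rw [SimpleGraph.deleteEdges_adj]
          exact ⟨hab, fun hmem =>
            S_edge_not_both_in_supp h4 hS hcard c hmem v.2 hbK⟩
        refine ⟨s(v, ⟨b, hbK⟩), ⟨?_, Sym2.mem_mk_left _ _⟩, by simp [Sym2.map_pair_eq]⟩
        rw [SimpleGraph.mem_edgeSet]
        exact hGS
      · right
        refine ⟨?_, he⟩
        by_contra hmem
        exact hbK ((ConnectedComponent.mem_supp_iff _ _).mpr
          (by rw [← (ConnectedComponent.mem_supp_iff _ _).mp v.2]
              exact ConnectedComponent.sound
                (SimpleGraph.deleteEdges_adj.mpr ⟨hab, hmem⟩).symm.reachable))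
    · apply Set.union_subset
      · rintro e ⟨eh, ⟨hehE, hveh⟩, rfl⟩
        induction eh using Sym2.ind with
        | _ xh yh =>
          rw [SimpleGraph.mem_edgeSet] at hehE
          have hGadj : G.Adj (xh : V) (yh : V) :=
            (SimpleGraph.deleteEdges_adj.mp hehE).1
          rw [Sym2.mem_iff] at hveh
          rw [Sym2.map_pair_eq]
          rcases hveh with rfl | rfl
          · refine mem_bd hGadj rfl ?_
            intro hmem
            exact hGadj.ne' hmem
          · have h1 : s((xh : V), (v : V)) = s((v : V), (xh : V)) := Sym2.eq_swap
            rw [h1]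
            refine mem_bd hGadj.symm rfl ?_
            intro hmem
            exact hGadj.ne hmem
      · exact Set.inter_subset_right
  have hdisjIS : Disjoint I (S ∩ edgeBoundary G {(v : V)}) := by
    rw [Set.disjoint_left]
    rintro e heI ⟨heS, -⟩
    induction e using Sym2.ind with
    | _ a b =>
      exact S_edge_not_both_in_supp h4 hS hcard c heS
        (hIends _ heI a (Sym2.mem_mk_left _ _))
        (hIends _ heI b (Sym2.mem_mk_right _ _))
  have hcard3 : (edgeBoundary G {(v : V)}).ncard = 3 := ncard_bd_singleton hcubic _
  have hcardI : I.ncard = ((H.neighborSet v)).ncard := by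
    rw [hI, Set.ncard_image_of_injective _ (Sym2.map.injective Subtype.val_injective)]
    exact ncard_incidence H v
  rw [hsplit, Set.ncard_union_eq hdisjIS (Set.toFinite _) (Set.toFinite _)] at hcard3
  omega

end Stmt14
namespace Stmt14
open Classical
variable {V : Type} [Fintype V] {G : SimpleGraph V} {S : Set (Sym2 V)}

lemma S_of_out {c : (G.deleteEdges S).ConnectedComponent} {a b : V} (ha : a ∈ c.supp)
    (hb : b ∉ c.supp) (hab : G.Adj a b) : s(a, b) ∈ S := by
  by_contra hmem
  exact hb ((ConnectedComponent.mem_supp_iff _ _).mpr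
    (by rw [← (ConnectedComponent.mem_supp_iff _ _).mp ha]
        exact ConnectedComponent.sound
          (SimpleGraph.deleteEdges_adj.mpr ⟨hab, hmem⟩).symm.reachable))

lemma GS_adj_of (h4 : CyclicallyEdgeConnected G 4) (hS : CycleSeparating G S)
    (hcard : Nat.card S = 4) (c : (G.deleteEdges S).ConnectedComponent) {a b : V}
    (ha : a ∈ c.supp) (hb : b ∈ c.supp) (hab : G.Adj a b) : (G.deleteEdges S).Adj a b :=
  SimpleGraph.deleteEdges_adj.mpr
    ⟨hab, fun hm => S_edge_not_both_in_supp h4 hS hcard c hm ha hb⟩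

/-- boundary of (intersection of) component projections is contained in lifted cut
edges plus `S`. -/
lemma quad_bd (h4 : CyclicallyEdgeConnected G 4) (hS : CycleSeparating G S)
    (hcard : Nat.card S = 4) (c : (G.deleteEdges S).ConnectedComponent)
    (R T : Set (Sym2 ↥c.supp))
    (A : ((((G.deleteEdges S).induce c.supp).deleteEdges R)).ConnectedComponent)
    (C : ((((G.deleteEdges S).induce c.supp).deleteEdges T)).ConnectedComponent) :
    edgeBoundary G ((Subtype.val '' A.supp) ∩ (Subtype.val '' C.supp))
      ⊆ ((Sym2.map Subtype.val '' R) ∪ (Sym2.map Subtype.val '' T)) ∪ S := by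
  intro e he
  obtain ⟨a, b, rfl, hab, ha, hb⟩ := bd_elim he
  obtain ⟨⟨ah, hahA, ha1⟩, ⟨ch, hchC, hc1⟩⟩ := ha
  have hahc : ch = ah := Subtype.val_injective (hc1.trans ha1.symm)
  rw [hahc] at hchC
  have haK : a ∈ c.supp := ha1 ▸ ah.2
  by_cases hbK : b ∈ c.supp
  · have hGS : (G.deleteEdges S).Adj a b :=
      GS_adj_of h4 hS hcard c haK hbK hab
    have hHadj : ((G.deleteEdges S).induce c.supp).Adj ah ⟨b, hbK⟩ := by
      simp only [SimpleGraph.comap_adj, Function.Embedding.coe_subtype]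
      rw [ha1]
      exact hGS
    by_cases hR : s(ah, (⟨b, hbK⟩ : ↥c.supp)) ∈ R
    · exact Or.inl (Or.inl ⟨_, hR, by simp [Sym2.map_pair_eq, ha1]⟩)
    · by_cases hT : s(ah, (⟨b, hbK⟩ : ↥c.supp)) ∈ T
      · exact Or.inl (Or.inr ⟨_, hT, by simp [Sym2.map_pair_eq, ha1]⟩)
      · exfalso
        apply hb
        constructor
        · refine ⟨⟨b, hbK⟩, ?_, rfl⟩
          rw [ConnectedComponent.mem_supp_iff] at hahA ⊢
          rw [← hahA]
          exact (ConnectedComponent.sound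
            (SimpleGraph.deleteEdges_adj.mpr ⟨hHadj, hR⟩).symm.reachable)
        · refine ⟨⟨b, hbK⟩, ?_, rfl⟩
          rw [ConnectedComponent.mem_supp_iff] at hchC ⊢
          rw [← hchC]
          exact (ConnectedComponent.sound
            (SimpleGraph.deleteEdges_adj.mpr ⟨hHadj, hT⟩).symm.reachable)
  · exact Or.inr (S_of_out haK hbK hab)

lemma comp_bd (h4 : CyclicallyEdgeConnected G 4) (hS : CycleSeparating G S)
    (hcard : Nat.card S = 4) (c : (G.deleteEdges S).ConnectedComponent)
    (R : Set (Sym2 ↥c.supp))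
    (A : ((((G.deleteEdges S).induce c.supp).deleteEdges R)).ConnectedComponent) :
    edgeBoundary G (Subtype.val '' A.supp) ⊆ (Sym2.map Subtype.val '' R) ∪ S := by
  have h := quad_bd h4 hS hcard c R R A A
  rw [Set.inter_self, Set.union_self] at h
  exact h

lemma comp_proj_nonempty {W : Type} {Γ : SimpleGraph W} (A : Γ.ConnectedComponent) :
    A.supp.Nonempty := by
  obtain ⟨z, hz⟩ := A.exists_rep
  exact ⟨z, (ConnectedComponent.mem_supp_iff _ _).mpr hz⟩

lemma comp_proj_disjoint {W : Type} {Γ : SimpleGraph W} {A B : Γ.ConnectedComponent}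
    (hAB : A ≠ B) : Disjoint A.supp B.supp := by
  rw [Set.disjoint_left]
  intro x hxA hxB
  rw [ConnectedComponent.mem_supp_iff] at hxA hxB
  exact hAB (hxA ▸ hxB ▸ rfl)

lemma val_image_disjoint {W : Type} {P : Set W} {A B : Set ↥P} (h : Disjoint A B) :
    Disjoint (Subtype.val '' A) (Subtype.val '' B) := by
  rw [Set.disjoint_left]
  rintro x ⟨a, ha, rfl⟩ ⟨b, hb, hba⟩
  have hh : b = a := Subtype.val_injective hba
  rw [hh] at hb
  exact (Set.disjoint_left.mp h ha) hb

lemma two_comps (hcubic : IsCubic G) (h4 : CyclicallyEdgeConnected G 4)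
    (hS : CycleSeparating G S) (hcard : Nat.card S = 4)
    (c : (G.deleteEdges S).ConnectedComponent) (R : Set (Sym2 ↥c.supp))
    (hR2 : Nat.card R = 2)
    (hRdis : ¬(((G.deleteEdges S).induce c.supp).deleteEdges R).Connected) :
    ∃ A B : ((((G.deleteEdges S).induce c.supp).deleteEdges R)).ConnectedComponent,
      A ≠ B ∧ ∀ z : ↥c.supp,
        ((((G.deleteEdges S).induce c.supp).deleteEdges R)).connectedComponentMk z = A
        ∨ ((((G.deleteEdges S).induce c.supp).deleteEdges R)).connectedComponentMk z = B := by
  classical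
  set Γ := (((G.deleteEdges S).induce c.supp).deleteEdges R) with hΓ
  have hKne : Nonempty ↥c.supp := by
    obtain ⟨v, hv⟩ := c.exists_rep
    exact ⟨⟨v, (ConnectedComponent.mem_supp_iff _ _).mpr hv⟩⟩
  have hnp : ¬Γ.Preconnected := by
    intro h
    exact hRdis ((connected_iff Γ).mpr ⟨h, hKne⟩)
  rw [SimpleGraph.Preconnected] at hnp
  push_neg at hnp
  obtain ⟨x, y, hxy⟩ := hnp
  refine ⟨Γ.connectedComponentMk x, Γ.connectedComponentMk y,
    fun h => hxy (ConnectedComponent.exact h), ?_⟩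
  intro z
  by_contra hz
  push_neg at hz
  obtain ⟨hzx, hzy⟩ := hz
  -- three distinct components: contradiction by counting
  set s : Finset (Γ.ConnectedComponent) :=
    {Γ.connectedComponentMk x, Γ.connectedComponentMk y, Γ.connectedComponentMk z} with hs
  set Q : Γ.ConnectedComponent → Set V := fun A => Subtype.val '' A.supp with hQ
  obtain ⟨hupper, hsle, hlow⟩ := family_bounds hcubic h4 hS hcard c s Q
    (fun A _ => by rintro w ⟨wh, _, rfl⟩; exact wh.2)
    (fun A _ => (comp_proj_nonempty A).image _)
    (fun A _ B _ hAB => val_image_disjoint (comp_proj_disjoint hAB))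
    (Sym2.map Subtype.val '' R) (fun A _ => comp_bd h4 hS hcard c R A)
  have hR2' : (Sym2.map Subtype.val '' R).ncard = 2 := by
    rw [Set.ncard_image_of_injective _ (Sym2.map.injective Subtype.val_injective),
      ← Nat.card_coe_set_eq]
    exact hR2
  have hS4 : S.ncard = 4 := by rw [← Nat.card_coe_set_eq]; exact hcard
  have hxy' : Γ.connectedComponentMk x ≠ Γ.connectedComponentMk y :=
    fun h => hxy (ConnectedComponent.exact h)
  have hxz' : Γ.connectedComponentMk x ≠ Γ.connectedComponentMk z := fun h => hzx h.symm
  have hyz' : Γ.connectedComponentMk y ≠ Γ.connectedComponentMk z := fun h => hzy h.symm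
  have hsum : ∀ f : Γ.ConnectedComponent → ℕ,
      ∑ A ∈ s, f A = f (Γ.connectedComponentMk x) + f (Γ.connectedComponentMk y)
        + f (Γ.connectedComponentMk z) := by
    intro f
    rw [hs, Finset.sum_insert (by simp [hxy', hxz']),
      Finset.sum_insert (by simp [hyz']), Finset.sum_singleton]
    omega
  rw [hsum] at hupper hsle
  rw [hsum] at hupper
  have h0 := hlow (Γ.connectedComponentMk x) (by simp [hs])
  have h1 := hlow (Γ.connectedComponentMk y) (by simp [hs])
  have h2 := hlow (Γ.connectedComponentMk z) (by simp [hs])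
  rw [hR2'] at hupper
  rw [hS4] at hsle
  omega

end Stmt14
namespace Stmt14
open Classical
variable {V : Type} [Fintype V] {G : SimpleGraph V} {S : Set (Sym2 V)}

lemma s_le_one (hcubic : IsCubic G) (h4 : CyclicallyEdgeConnected G 4)
    (hS : CycleSeparating G S) (hcard : Nat.card S = 4)
    (c : (G.deleteEdges S).ConnectedComponent) (hK4 : (c.supp : Set V).ncard = 4)
    (v : ↥c.supp) : (S ∩ edgeBoundary G {(v : V)}).ncard ≤ 1 := by
  classical
  by_contra hcon
  push_neg at hcon
  have hvs := vertex_split hcubic h4 hS hcard c v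
  set H := (G.deleteEdges S).induce c.supp with hH
  set I : Set (Sym2 V) := Sym2.map Subtype.val '' {e | e ∈ H.edgeSet ∧ v ∈ e} with hI
  have hcardI : I.ncard = ((H.neighborSet v)).ncard := by
    rw [hI, Set.ncard_image_of_injective _ (Sym2.map.injective Subtype.val_injective)]
    exact ncard_incidence H v
  set Y : Set V := c.supp \ {(v : V)} with hY
  have hYsub : Y ⊆ c.supp := Set.diff_subset
  have hYcard : Y.ncard = 3 := by
    rw [hY, Set.ncard_diff_singleton_of_mem v.2, hK4]
  have hYne : Y.Nonempty := Set.nonempty_of_ncard_ne_zero (by omega)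
  have hbd : edgeBoundary G Y ⊆ I ∪ (S ∩ edgeBoundary G Y) := by
    intro e he
    obtain ⟨a, b, rfl, hab, ha, hb⟩ := bd_elim he
    by_cases hbK : b ∈ c.supp
    · have hbv : b = (v : V) := by
        by_contra hne
        exact hb ⟨hbK, hne⟩
      subst hbv
      left
      have haK : a ∈ c.supp := ha.1
      have hGS : (G.deleteEdges S).Adj a (v : V) :=
        GS_adj_of h4 hS hcard c haK v.2 hab
      refine ⟨s((⟨a, haK⟩ : ↥c.supp), v), ⟨?_, Sym2.mem_mk_right _ _⟩,
        by simp [Sym2.map_pair_eq]⟩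
      rw [SimpleGraph.mem_edgeSet]
      simp only [hH, SimpleGraph.comap_adj, Function.Embedding.coe_subtype]
      exact hGS
    · exact Or.inr ⟨S_of_out ha.1 hbK hab, he⟩
  have hup : (edgeBoundary G Y).ncard ≤ I.ncard + (S ∩ edgeBoundary G Y).ncard :=
    le_trans (Set.ncard_le_ncard hbd (Set.toFinite _)) (Set.ncard_union_le _ _)
  have hdisj : Disjoint (S ∩ edgeBoundary G Y) (S ∩ edgeBoundary G {(v : V)}) :=
    S_bd_disjoint h4 hS hcard c hYsub (by simpa using v.2) Set.disjoint_sdiff_left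
  have hsum2 : (S ∩ edgeBoundary G Y).ncard + (S ∩ edgeBoundary G {(v : V)}).ncard
      ≤ S.ncard := by
    rw [← Set.ncard_union_eq hdisj (Set.toFinite _) (Set.toFinite _)]
    exact Set.ncard_le_ncard (Set.union_subset Set.inter_subset_left
      Set.inter_subset_left) (Set.toFinite _)
  have hS4 : S.ncard = 4 := by rw [← Nat.card_coe_set_eq]; exact hcard
  have hlow := min_le_bd hcubic h4 hS c Y.ncard Y rfl hYsub hYne
  rw [hYcard] at hlow
  norm_num at hlow
  omega

end Stmt14
namespace Stmt14
open Classical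
variable {V : Type} [Fintype V] {G : SimpleGraph V} {S : Set (Sym2 V)}

lemma ne_of_disjoint_nonempty {X Y : Set V} (hd : Disjoint X Y) (hne : X.Nonempty) :
    X ≠ Y := by
  intro heq
  exact hne.ne_empty (by have h := disjoint_self.mp (heq ▸ hd); simp at h; exact heq ▸ h)

end Stmt14

open Stmt14 in
theorem stmt_14_main {V : Type} [Fintype V] (G : SimpleGraph V)
    (hcubic : IsCubic G) (h4 : CyclicallyEdgeConnected G 4)
    (S : Set (Sym2 V)) (hS : CycleSeparating G S) (hcard : Nat.card S = 4)
    (c : (G.deleteEdges S).ConnectedComponent)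
    (R T : Set (Sym2 c.supp))
    (hR2 : Nat.card R = 2) (hT2 : Nat.card T = 2)
    (hRdis : ¬ (((G.deleteEdges S).induce c.supp).deleteEdges R).Connected)
    (hTdis : ¬ (((G.deleteEdges S).induce c.supp).deleteEdges T).Connected)
    (hcmp : ¬ ComparableCuts ((G.deleteEdges S).induce c.supp) R T) :
    (Nat.card c.supp = 4 ∧
      ∀ v : c.supp, Nat.card (((G.deleteEdges S).induce c.supp).neighborSet v) = 2) := by
  classical
  obtain ⟨A, B, hAB, hABall⟩ := two_comps hcubic h4 hS hcard c R hR2 hRdis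
  obtain ⟨C, D, hCD, hCDall⟩ := two_comps hcubic h4 hS hcard c T hT2 hTdis
  have hns : ∀ (P : (((G.deleteEdges S).induce c.supp).deleteEdges R).ConnectedComponent)
      (P' : (((G.deleteEdges S).induce c.supp).deleteEdges T).ConnectedComponent),
      ¬(P.supp ⊆ P'.supp) := by
    intro P P' hsub'
    exact hcmp ⟨P, P', Or.inl hsub'⟩
  -- quadrant witnesses
  have wgen : ∀ (P : (((G.deleteEdges S).induce c.supp).deleteEdges R).ConnectedComponent)
      (P1 P2 : (((G.deleteEdges S).induce c.supp).deleteEdges T).ConnectedComponent),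
      (∀ z : ↥c.supp,
        ((((G.deleteEdges S).induce c.supp).deleteEdges T)).connectedComponentMk z = P1
        ∨ ((((G.deleteEdges S).induce c.supp).deleteEdges T)).connectedComponentMk z = P2) →
      ∃ z, z ∈ P.supp ∧ z ∈ P2.supp := by
    intro P P1 P2 hall
    obtain ⟨z, hz1, hz2⟩ := Set.not_subset.mp (hns P P1)
    rcases hall z with h | h
    · exact absurd ((ConnectedComponent.mem_supp_iff _ _).mpr h) hz2
    · exact ⟨z, hz1, (ConnectedComponent.mem_supp_iff _ _).mpr h⟩
  obtain ⟨zAD, hzAD⟩ := wgen A C D hCDall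
  obtain ⟨zAC, hzAC⟩ := wgen A D C (fun z => (hCDall z).symm)
  obtain ⟨zBD, hzBD⟩ := wgen B C D hCDall
  obtain ⟨zBC, hzBC⟩ := wgen B D C (fun z => (hCDall z).symm)
  -- V-level quadrants
  set XA : Set V := Subtype.val '' A.supp with hXA
  set XB : Set V := Subtype.val '' B.supp with hXB
  set XC : Set V := Subtype.val '' C.supp with hXC
  set XD : Set V := Subtype.val '' D.supp with hXD
  set QAC : Set V := XA ∩ XC with hQAC
  set QAD : Set V := XA ∩ XD with hQAD
  set QBC : Set V := XB ∩ XC with hQBC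
  set QBD : Set V := XB ∩ XD with hQBD
  have memQ : ∀ (z : ↥c.supp) (P : (((G.deleteEdges S).induce c.supp).deleteEdges R).ConnectedComponent)
      (P' : (((G.deleteEdges S).induce c.supp).deleteEdges T).ConnectedComponent),
      z ∈ P.supp → z ∈ P'.supp →
      (z : V) ∈ (Subtype.val '' P.supp) ∩ (Subtype.val '' P'.supp) :=
    fun z P P' h1 h2 => ⟨⟨z, h1, rfl⟩, ⟨z, h2, rfl⟩⟩
  have hneAC : QAC.Nonempty := ⟨_, memQ zAC A C hzAC.1 hzAC.2⟩
  have hneAD : QAD.Nonempty := ⟨_, memQ zAD A D hzAD.1 hzAD.2⟩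
  have hneBC : QBC.Nonempty := ⟨_, memQ zBC B C hzBC.1 hzBC.2⟩
  have hneBD : QBD.Nonempty := ⟨_, memQ zBD B D hzBD.1 hzBD.2⟩
  have dAB : Disjoint XA XB := val_image_disjoint (comp_proj_disjoint hAB)
  have dCD : Disjoint XC XD := val_image_disjoint (comp_proj_disjoint hCD)
  -- pairwise disjointness of quadrants
  have d12 : Disjoint QAC QAD := dCD.mono Set.inter_subset_right Set.inter_subset_right
  have d13 : Disjoint QAC QBC := dAB.mono Set.inter_subset_left Set.inter_subset_left
  have d14 : Disjoint QAC QBD := dAB.mono Set.inter_subset_left Set.inter_subset_left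
  have d23 : Disjoint QAD QBC := dAB.mono Set.inter_subset_left Set.inter_subset_left
  have d24 : Disjoint QAD QBD := dAB.mono Set.inter_subset_left Set.inter_subset_left
  have d34 : Disjoint QBC QBD := dCD.mono Set.inter_subset_right Set.inter_subset_right
  have n12 : QAC ≠ QAD := ne_of_disjoint_nonempty d12 hneAC
  have n13 : QAC ≠ QBC := ne_of_disjoint_nonempty d13 hneAC
  have n14 : QAC ≠ QBD := ne_of_disjoint_nonempty d14 hneAC
  have n23 : QAD ≠ QBC := ne_of_disjoint_nonempty d23 hneAD
  have n24 : QAD ≠ QBD := ne_of_disjoint_nonempty d24 hneAD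
  have n34 : QBC ≠ QBD := ne_of_disjoint_nonempty d34 hneBC
  set sQ : Finset (Set V) := {QAC, QAD, QBC, QBD} with hsQ
  have hmem : ∀ X ∈ sQ, X = QAC ∨ X = QAD ∨ X = QBC ∨ X = QBD := by
    intro X hX
    simpa [hsQ] using hX
  have hsub : ∀ X ∈ sQ, X ⊆ c.supp := by
    intro X hX
    rcases hmem X hX with rfl | rfl | rfl | rfl <;>
      · intro x hx
        obtain ⟨⟨xh, _, rfl⟩, _⟩ := hx
        exact xh.2
  have hne : ∀ X ∈ sQ, X.Nonempty := by
    intro X hX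
    rcases hmem X hX with rfl | rfl | rfl | rfl
    exacts [hneAC, hneAD, hneBC, hneBD]
  have hdisj : ∀ X ∈ sQ, ∀ Y ∈ sQ, X ≠ Y → Disjoint X Y := by
    intro X hX Y hY hXY
    rcases hmem X hX with rfl | rfl | rfl | rfl <;>
      rcases hmem Y hY with rfl | rfl | rfl | rfl <;>
      first
        | exact absurd rfl hXY
        | exact d12 | exact d13 | exact d14 | exact d23 | exact d24 | exact d34
        | exact d12.symm | exact d13.symm | exact d14.symm | exact d23.symm
        | exact d24.symm | exact d34.symm
  set E : Set (Sym2 V) := (Sym2.map Subtype.val '' R) ∪ (Sym2.map Subtype.val '' T)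
    with hE
  have hbd : ∀ X ∈ sQ, edgeBoundary G X ⊆ E ∪ S := by
    intro X hX
    rcases hmem X hX with rfl | rfl | rfl | rfl
    exacts [quad_bd h4 hS hcard c R T A C, quad_bd h4 hS hcard c R T A D,
      quad_bd h4 hS hcard c R T B C, quad_bd h4 hS hcard c R T B D]
  obtain ⟨hupper, hsle, hlow⟩ := family_bounds hcubic h4 hS hcard c sQ id
    hsub hne hdisj E hbd
  have hEcard : E.ncard ≤ 4 := by
    have h1 : (Sym2.map Subtype.val '' R).ncard = 2 := by
      rw [Set.ncard_image_of_injective _ (Sym2.map.injective Subtype.val_injective),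
        ← Nat.card_coe_set_eq]
      exact hR2
    have h2 : (Sym2.map Subtype.val '' T).ncard = 2 := by
      rw [Set.ncard_image_of_injective _ (Sym2.map.injective Subtype.val_injective),
        ← Nat.card_coe_set_eq]
      exact hT2
    calc E.ncard ≤ _ + _ := Set.ncard_union_le _ _
      _ ≤ 4 := by rw [h1, h2]
  have hS4 : S.ncard = 4 := by rw [← Nat.card_coe_set_eq]; exact hcard
  have hsum : ∀ f : Set V → ℕ, ∑ X ∈ sQ, f X = f QAC + f QAD + f QBC + f QBD := by
    intro f
    rw [hsQ, Finset.sum_insert (by simp [n12, n13, n14]),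
      Finset.sum_insert (by simp [n23, n24]), Finset.sum_insert (by simp [n34]),
      Finset.sum_singleton]
    omega
  rw [hsum] at hupper hsle
  rw [hsum] at hupper
  have hl1 := hlow QAC (by simp [hsQ])
  have hl2 := hlow QAD (by simp [hsQ])
  have hl3 := hlow QBC (by simp [hsQ])
  have hl4 := hlow QBD (by simp [hsQ])
  simp only [id] at hupper hsle hl1 hl2 hl3 hl4
  -- every quadrant is a singleton
  have hsingle : ∀ X ∈ sQ, X.ncard = 1 := by
    intro X hX
    by_contra hX1
    have hX2 : 2 ≤ X.ncard := by
      have h1 : 1 ≤ X.ncard := (Set.ncard_pos (Set.toFinite _)).mpr (hne X hX)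
      omega
    have h4X : 4 ≤ (edgeBoundary G X).ncard := by
      have := min_le_bd hcubic h4 hS c X.ncard X rfl (hsub X hX) (hne X hX)
      have hmin : (4 : ℕ) ≤ min 4 (X.ncard + 2) := le_min le_rfl (by omega)
      omega
    rcases hmem X hX with rfl | rfl | rfl | rfl <;> omega
  have e1 : QAC.ncard = 1 := hsingle QAC (by simp [hsQ])
  have e2 : QAD.ncard = 1 := hsingle QAD (by simp [hsQ])
  have e3 : QBC.ncard = 1 := hsingle QBC (by simp [hsQ])
  have e4 : QBD.ncard = 1 := hsingle QBD (by simp [hsQ])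
  -- the union is all of c.supp
  have hKeq : (c.supp : Set V) = QAC ∪ QAD ∪ QBC ∪ QBD := by
    apply Set.Subset.antisymm
    · intro z hz
      have hzA := hABall ⟨z, hz⟩
      have hzC := hCDall ⟨z, hz⟩
      have hmk : ∀ (P : (((G.deleteEdges S).induce c.supp).deleteEdges R).ConnectedComponent),
          ((((G.deleteEdges S).induce c.supp).deleteEdges R)).connectedComponentMk ⟨z, hz⟩ = P
          → z ∈ Subtype.val '' P.supp :=
        fun P h => ⟨⟨z, hz⟩, (ConnectedComponent.mem_supp_iff _ _).mpr h, rfl⟩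
      have hmk' : ∀ (P : (((G.deleteEdges S).induce c.supp).deleteEdges T).ConnectedComponent),
          ((((G.deleteEdges S).induce c.supp).deleteEdges T)).connectedComponentMk ⟨z, hz⟩ = P
          → z ∈ Subtype.val '' P.supp :=
        fun P h => ⟨⟨z, hz⟩, (ConnectedComponent.mem_supp_iff _ _).mpr h, rfl⟩
      rcases hzA with h | h <;> rcases hzC with h' | h'
      · exact Or.inl (Or.inl (Or.inl ⟨hmk _ h, hmk' _ h'⟩))
      · exact Or.inl (Or.inl (Or.inr ⟨hmk _ h, hmk' _ h'⟩))
      · exact Or.inl (Or.inr ⟨hmk _ h, hmk' _ h'⟩)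
      · exact Or.inr ⟨hmk _ h, hmk' _ h'⟩
    · intro z hz
      rcases hz with ((h | h) | h) | h
      exacts [(hsub QAC (by simp [hsQ])) h, (hsub QAD (by simp [hsQ])) h,
        (hsub QBC (by simp [hsQ])) h, (hsub QBD (by simp [hsQ])) h]
  have hK4 : (c.supp : Set V).ncard = 4 := by
    rw [hKeq]
    rw [Set.ncard_union_eq (by
        refine Set.disjoint_union_left.mpr ⟨Set.disjoint_union_left.mpr ⟨d14, d24⟩, d34⟩)
      (Set.toFinite _) (Set.toFinite _)]
    rw [Set.ncard_union_eq (Set.disjoint_union_left.mpr ⟨d13, d23⟩)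
      (Set.toFinite _) (Set.toFinite _)]
    rw [Set.ncard_union_eq d12 (Set.toFinite _) (Set.toFinite _)]
    omega
  -- now each vertex has S-degree exactly one
  have hstot : 4 ≤ (S ∩ edgeBoundary G QAC).ncard + (S ∩ edgeBoundary G QAD).ncard
      + (S ∩ edgeBoundary G QBC).ncard + (S ∩ edgeBoundary G QBD).ncard := by
    omega
  obtain ⟨x1, hx1⟩ := Set.ncard_eq_one.mp e1
  obtain ⟨x2, hx2⟩ := Set.ncard_eq_one.mp e2
  obtain ⟨x3, hx3⟩ := Set.ncard_eq_one.mp e3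
  obtain ⟨x4, hx4⟩ := Set.ncard_eq_one.mp e4
  have hx1K : x1 ∈ c.supp := hsub QAC (by simp [hsQ]) (hx1 ▸ rfl)
  have hx2K : x2 ∈ c.supp := hsub QAD (by simp [hsQ]) (hx2 ▸ rfl)
  have hx3K : x3 ∈ c.supp := hsub QBC (by simp [hsQ]) (hx3 ▸ rfl)
  have hx4K : x4 ∈ c.supp := hsub QBD (by simp [hsQ]) (hx4 ▸ rfl)
  rw [hx1, hx2, hx3, hx4] at hstot
  have hs1 := s_le_one hcubic h4 hS hcard c hK4 ⟨x1, hx1K⟩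
  have hs2 := s_le_one hcubic h4 hS hcard c hK4 ⟨x2, hx2K⟩
  have hs3 := s_le_one hcubic h4 hS hcard c hK4 ⟨x3, hx3K⟩
  have hs4 := s_le_one hcubic h4 hS hcard c hK4 ⟨x4, hx4K⟩
  simp only [Subtype.coe_mk] at hs1 hs2 hs3 hs4
  constructor
  · rw [Nat.card_coe_set_eq]
    exact hK4
  · intro v
    have hvs := vertex_split hcubic h4 hS hcard c v
    have hvK : (v : V) ∈ QAC ∪ QAD ∪ QBC ∪ QBD := hKeq ▸ v.2
    rw [Nat.card_coe_set_eq]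
    rcases hvK with ((h | h) | h) | h
    · have heq : (v : V) = x1 := by rwa [hx1] at h
      rw [heq] at hvs
      omega
    · have heq : (v : V) = x2 := by rwa [hx2] at h
      rw [heq] at hvs
      omega
    · have heq : (v : V) = x3 := by rwa [hx3] at h
      rw [heq] at hvs
      omega
    · have heq : (v : V) = x4 := by rwa [hx4] at h
      rw [heq] at hvs
      omega

/-- Let `G` be a cyclically 4-edge-connected cubic graph, `S` a
cycle-separating 4-edge-cut and `K` a component of `G - S`. Then any two nontrivial
2-edge-cuts of `K` are comparable, or `K` is a cycle of length 4. -/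
theorem stmt_14 {V : Type} [Fintype V] (G : SimpleGraph V)
    (hconn : G.Connected) (hcubic : IsCubic G) (h4 : CyclicallyEdgeConnected G 4)
    (S : Set (Sym2 V)) (hS : CycleSeparating G S) (hcard : Nat.card S = 4)
    (c : (G.deleteEdges S).ConnectedComponent) :
    (∀ R T : Set (Sym2 c.supp),
      R ⊆ ((G.deleteEdges S).induce c.supp).edgeSet →
      T ⊆ ((G.deleteEdges S).induce c.supp).edgeSet →
      Nat.card R = 2 → Nat.card T = 2 →
      ¬ (((G.deleteEdges S).induce c.supp).deleteEdges R).Connected →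
      ¬ (((G.deleteEdges S).induce c.supp).deleteEdges T).Connected →
      NontrivialCut ((G.deleteEdges S).induce c.supp) R →
      NontrivialCut ((G.deleteEdges S).induce c.supp) T →
      ComparableCuts ((G.deleteEdges S).induce c.supp) R T) ∨
    (Nat.card c.supp = 4 ∧
      ∀ v : c.supp, Nat.card (((G.deleteEdges S).induce c.supp).neighborSet v) = 2) := by
  classical
  by_cases hC4 : (Nat.card c.supp = 4 ∧
      ∀ v : c.supp, Nat.card (((G.deleteEdges S).induce c.supp).neighborSet v) = 2)
  · exact Or.inr hC4
  · left
    intro R T _ _ hR2 hT2 hRdis hTdis _ _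
    by_contra hcmp
    exact hC4 (stmt_14_main G hcubic h4 S hS hcard c R T hR2 hT2 hRdis hTdis hcmp)
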